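/- arXiv:1510.04312 — 2 statements merged into one kernel-verified Lean document; each statement's English description precedes it below -/
import Mathlib

section
/- Let B be a Banach space, m ∈ ℕ, and K > 0. There is a constant C = C(K, m) > 0 such that: if A : B → B is a bounded linear operator with |A| ≤ K, and E ⊂ B is an m-dimensional subspace on which A is injective, then |(A|_E)^{-1}| ≤ C / det(A|E); in fact, for every unit vector v ∈ E one has det(A|E) ≤ m^m |A|_E|^{m−1} |Av|, so that one may take |(A|_E)^{-1}| ≤ m^m K^{m−1} / det(A|E). -/
open MeasureTheory Filter Metric Module Submodule Set

noncomputable section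

namespace BY

variable {B B' : Type*}

/-- The unit sphere of a subspace `E`. -/
def subSphere [NormedAddCommGroup B] [NormedSpace ℝ B] (E : Submodule ℝ B) : Set B :=
  {v : B | v ∈ E ∧ ‖v‖ = 1}

/-- `d_H(E, E')`: the Hausdorff distance between the unit spheres of `E` and `E'`. -/
def dH [NormedAddCommGroup B] [NormedSpace ℝ B] (E E' : Submodule ℝ B) : ℝ :=
  Metric.hausdorffDist (subSphere E) (subSphere E')

/-- The supremum of `‖π x‖` over `x ∈ S`, where `π` is the projection onto `E` along `F`. -/
def projNormOn [NormedAddCommGroup B] [NormedSpace ℝ B] (E F : Submodule ℝ B)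
    (h : IsCompl E F) (S : Set B) : ℝ :=
  sSup ((fun x => ‖(E.linearProjOfIsCompl F h x : B)‖) '' S)

/-- `|π_{E⊕F}|`: the operator norm of the projection onto `E` along `F`. -/
def projNorm [NormedAddCommGroup B] [NormedSpace ℝ B] (E F : Submodule ℝ B)
    (h : IsCompl E F) : ℝ :=
  projNormOn E F h (Metric.closedBall 0 1)

/-- `α(E, F) = inf { ‖e - f‖ : e ∈ E, ‖e‖ = 1, f ∈ F }`. -/
def alphaAngle [NormedAddCommGroup B] [NormedSpace ℝ B] (E F : Submodule ℝ B) : ℝ :=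
  sInf {r : ℝ | ∃ e ∈ E, ∃ f ∈ F, ‖e‖ = 1 ∧ r = ‖e - f‖}

/-- `ω_k`: the volume of the Euclidean unit ball in `ℝ^k`. -/
def euclideanBallVol (k : ℕ) : ENNReal :=
  volume (Metric.closedBall (0 : EuclideanSpace ℝ (Fin k)) 1)

/-- `μ` is the induced volume `m_E` on the `k`-dimensional subspace `E`: the (unique) Haar
measure on `E` assigning mass `ω_k` to the unit ball of `E`. -/
def IsInducedVolume [NormedAddCommGroup B] [NormedSpace ℝ B] [MeasurableSpace B]
    (E : Submodule ℝ B) (k : ℕ) (μ : Measure E) : Prop :=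
  Measure.IsAddHaarMeasure μ ∧ μ {v : E | ‖v‖ ≤ 1} = euclideanBallVol k

/-- `det(A|E)`, computed with respect to induced volumes `μE` on `E` and `μF` on a
subspace `F` containing `A(E)`: the ratio `μF(A(B_E)) / μE(B_E)` where `B_E` is
the unit ball of `E`. -/
def detIn [NormedAddCommGroup B] [NormedSpace ℝ B] [NormedAddCommGroup B'] [NormedSpace ℝ B']
    [MeasurableSpace B] [MeasurableSpace B']
    (A : B →L[ℝ] B') (E : Submodule ℝ B) (F : Submodule ℝ B')
    (μE : Measure E) (μF : Measure F) : ℝ :=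
  (μF {w : F | ∃ v : B, v ∈ E ∧ ‖v‖ ≤ 1 ∧ A v = (w : B')}).toReal /
    (μE {v : E | ‖v‖ ≤ 1}).toReal

/-- `P[v₁, …, v_k]`: the parallelepiped spanned by the vectors `v i`. -/
def pped [AddCommGroup B] [Module ℝ B] {k : ℕ} (v : Fin k → B) : Set B :=
  {x : B | ∃ a : Fin k → ℝ, (∀ i, a i ∈ Set.Icc (0 : ℝ) 1) ∧ x = ∑ i, a i • v i}

/-- `N[v₁, …, v_k]`: the sum of the norms of the projections, within the span of the `v i`,
onto each `⟨v i⟩` along the span of the other basis vectors. -/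
def Nquan [NormedAddCommGroup B] [NormedSpace ℝ B] {k : ℕ} (v : Fin k → B) : ℝ :=
  ∑ i, sSup {r : ℝ | ∃ a : Fin k → ℝ, ‖∑ j, a j • v j‖ ≤ 1 ∧ r = ‖a i • v i‖}

/-- The operator norm of the restriction of `A` to the subspace `E`. -/
def opNormOnSub [NormedAddCommGroup B] [NormedSpace ℝ B] [NormedAddCommGroup B']
    [NormedSpace ℝ B'] (A : B →L[ℝ] B') (E : Submodule ℝ B) : ℝ :=
  sSup {r : ℝ | ∃ v ∈ E, ‖v‖ ≤ 1 ∧ r = ‖A v‖}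

/-- The `n`-th iterate (`n ∈ ℤ`) of the invertible pair `(f, g)`, `g = f⁻¹`. -/
def zIter {X : Type*} (f g : X → X) (n : ℤ) (x : X) : X :=
  if 0 ≤ n then f^[n.toNat] x else g^[(-n).toNat] x

/-- `ψ'(x) = sup_{n ∈ ℤ} e^{-|n| δ} ψ(f^n x)`. -/
def psiSup {X : Type*} (f g : X → X) (ψ : X → ℝ) (δ : ℝ) (x : X) : ℝ :=
  sSup (Set.range fun n : ℤ => Real.exp (-|(n : ℝ)| * δ) * ψ (zIter f g n x))

/-- The cocycle `T^n_x = T_{f^{n-1} x} ∘ ⋯ ∘ T_x`. -/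
def cocycle {X : Type*} [NormedAddCommGroup B] [NormedSpace ℝ B]
    (f : X → X) (T : X → B →L[ℝ] B) : ℕ → X → B →L[ℝ] B
  | 0, _ => ContinuousLinearMap.id ℝ B
  | n + 1, x => (cocycle f T n (f x)).comp (T x)

end BY

end

section AuxStatement17
open MeasureTheory Set Pointwise

private lemma real_integ (n : ℕ) {c : ℝ} (hc : 0 < c) :
    ∫ x in (-c⁻¹)..c⁻¹, (1 - c*|x|)^n = 2/((n+1)*c) := by
  have hb : (0:ℝ) ≤ c⁻¹ := by positivity
  have hint : ∀ a b : ℝ, IntervalIntegrable (fun x => (1 - c*|x|)^n) volume a b :=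
    fun a b => (Continuous.pow (by continuity) n).intervalIntegrable a b
  have hsplit := intervalIntegral.integral_add_adjacent_intervals (a := -c⁻¹) (b := 0)
    (c := c⁻¹) (hint _ _) (hint _ _)
  have h1 : ∫ x in (0:ℝ)..c⁻¹, (1 - c*|x|)^n = ∫ x in (0:ℝ)..c⁻¹, (1 - c*x)^n := by
    apply intervalIntegral.integral_congr
    intro x hx
    rw [Set.uIcc_of_le hb] at hx
    simp [abs_of_nonneg hx.1]
  have h2 : ∫ x in (-c⁻¹)..(0:ℝ), (1 - c*|x|)^n = ∫ x in (0:ℝ)..c⁻¹, (1 - c*x)^n := by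
    have : ∫ x in (-c⁻¹)..(0:ℝ), (1 - c*|x|)^n = ∫ x in (-c⁻¹)..(0:ℝ), (1 - c*(-x))^n := by
      apply intervalIntegral.integral_congr
      intro x hx
      rw [Set.uIcc_of_le (by linarith)] at hx
      simp [abs_of_nonpos hx.2]
    rw [this]
    have := intervalIntegral.integral_comp_neg (a := -c⁻¹) (b := 0) (fun y => (1 - c*y)^n)
    simpa using this
  have h3 : ∫ x in (0:ℝ)..c⁻¹, (1 - c*x)^n = c⁻¹ * (1/(n+1)) := by
    have h4 := intervalIntegral.integral_comp_mul_left (a := 0) (b := c⁻¹)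
      (fun y => (1-y)^n) (ne_of_gt hc)
    rw [h4, mul_zero, mul_inv_cancel₀ (ne_of_gt hc)]
    have h5 := intervalIntegral.integral_comp_sub_left (a := (0:ℝ)) (b := 1)
      (fun y => y^n) 1
    simp only [sub_zero, sub_self] at h5
    rw [h5, integral_pow]
    simp [smul_eq_mul]
  rw [← hsplit, h1, h2, h3]
  field_simp
  ring

lemma lint_integ (n : ℕ) {c : ℝ} (hc : 0 < c) :
    ∫⁻ s in Ioo (-c⁻¹) c⁻¹, ENNReal.ofReal ((1 - c*|s|)^n) = ENNReal.ofReal (2/((n+1)*c)) := by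
  have hcont : Continuous (fun x : ℝ => (1 - c*|x|)^n) := Continuous.pow (by continuity) n
  rw [← MeasureTheory.ofReal_integral_eq_lintegral_ofReal]
  · congr 1
    rw [← MeasureTheory.integral_Ioc_eq_integral_Ioo,
      ← intervalIntegral.integral_of_le (by linarith [inv_pos.mpr hc] : -c⁻¹ ≤ c⁻¹)]
    exact real_integ n hc
  · exact (hcont.integrableOn_Icc (a := -c⁻¹) (b := c⁻¹)).mono_set Ioo_subset_Icc_self
  · apply (MeasureTheory.ae_restrict_iff' measurableSet_Ioo).mpr
    filter_upwards with s hs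
    have h3 : |s| < c⁻¹ := abs_lt.mpr ⟨hs.1, hs.2⟩
    have h4 : c * |s| < 1 := by
      have := mul_lt_mul_of_pos_left h3 hc
      rwa [mul_inv_cancel₀ hc.ne'] at this
    exact pow_nonneg (by linarith) n

private lemma smul_gauge_set {n : ℕ} (g : (Fin n → ℝ) → ℝ)
    (hgs : ∀ (t : ℝ) (q), g (t • q) = |t| * g q) {r : ℝ} (hr : 0 < r) :
    {q : Fin n → ℝ | g q ≤ r} = r • {q : Fin n → ℝ | g q ≤ 1} := by
  ext q
  rw [mem_smul_set_iff_inv_smul_mem₀ hr.ne']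
  simp only [mem_setOf_eq, hgs, abs_inv, abs_of_pos hr]
  rw [inv_mul_le_iff₀ hr, mul_one]

lemma vol_gauge_set {n : ℕ} (g : (Fin n → ℝ) → ℝ)
    (hgs : ∀ (t : ℝ) (q), g (t • q) = |t| * g q) {r : ℝ} (hr : 0 < r) :
    volume {q : Fin n → ℝ | g q ≤ r}
      = ENNReal.ofReal (r^n) * volume {q : Fin n → ℝ | g q ≤ 1} := by
  rw [smul_gauge_set g hgs hr, Measure.addHaar_smul]
  congr 2
  rw [Module.finrank_fin_fun, abs_of_pos (by positivity)]

lemma pi_core (n : ℕ) (g : (Fin n → ℝ) → ℝ) (hg : Continuous g)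
    (hgs : ∀ (t : ℝ) (q), g (t • q) = |t| * g q)
    (c M : ℝ) (hc : 0 < c) (hcM : c ≤ M) :
    volume {a : Fin (n+1) → ℝ | |a 0| ≤ 1 ∧ g (fun i => a i.succ) ≤ 2*M}
      ≤ ENNReal.ofReal (((n:ℝ)+1)^(n+1) * M^n * c) *
        volume {a : Fin (n+1) → ℝ | c * |a 0| + g (fun i => a i.succ) ≤ 1} := by
  have hM : 0 < M := lt_of_lt_of_le hc hcM
  set Q1 : Set (Fin n → ℝ) := {q | g q ≤ 1} with hQ1
  set e := MeasurableEquiv.piFinSuccAbove (fun _ : Fin (n+1) => ℝ) 0 with he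
  have hmp : MeasurePreserving e volume volume :=
    MeasureTheory.volume_preserving_piFinSuccAbove _ 0
  have heapp : ∀ a : Fin (n+1) → ℝ, e a = (a 0, fun j => a j.succ) := by
    intro a; simp [he, MeasurableEquiv.piFinSuccAbove_apply]; rfl
  have hvol : (volume : Measure (ℝ × (Fin n → ℝ))) = (volume : Measure ℝ).prod volume :=
    Measure.volume_eq_prod _ _
  -- upper bound for slab
  have hX : {a : Fin (n+1) → ℝ | |a 0| ≤ 1 ∧ g (fun i => a i.succ) ≤ 2*M}
      = e ⁻¹' (Icc (-1:ℝ) 1 ×ˢ {q | g q ≤ 2*M}) := by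
    ext a
    simp only [mem_setOf_eq, mem_preimage, heapp, mem_prod, mem_Icc, abs_le]
  have hQmeas : ∀ r : ℝ, MeasurableSet {q : Fin n → ℝ | g q ≤ r} := fun r =>
    measurableSet_le hg.measurable measurable_const
  have hXvol : volume {a : Fin (n+1) → ℝ | |a 0| ≤ 1 ∧ g (fun i => a i.succ) ≤ 2*M}
      = ENNReal.ofReal 2 * (ENNReal.ofReal ((2*M)^n) * volume Q1) := by
    rw [hX, hmp.measure_preimage ((measurableSet_Icc.prod (hQmeas _)).nullMeasurableSet),
      hvol, Measure.prod_prod, Real.volume_Icc, vol_gauge_set g hgs (by positivity)]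
    norm_num
    rfl
  -- lower bound for ball-like set
  have hG : {a : Fin (n+1) → ℝ | c * |a 0| + g (fun i => a i.succ) ≤ 1}
      = e ⁻¹' {p : ℝ × (Fin n → ℝ) | c * |p.1| + g p.2 ≤ 1} := by
    ext a; simp only [mem_setOf_eq, mem_preimage, heapp]
  have hGmeas : MeasurableSet {p : ℝ × (Fin n → ℝ) | c * |p.1| + g p.2 ≤ 1} := by
    apply measurableSet_le _ measurable_const
    exact ((continuous_const.mul (continuous_abs.comp continuous_fst)).add
      (hg.comp continuous_snd)).measurable
  have hGvol : volume {a : Fin (n+1) → ℝ | c * |a 0| + g (fun i => a i.succ) ≤ 1}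
      ≥ ENNReal.ofReal (2/((n+1)*c)) * volume Q1 := by
    rw [hG, hmp.measure_preimage hGmeas.nullMeasurableSet, hvol,
      Measure.prod_apply hGmeas]
    have hslice : ∀ s : ℝ, s ∈ Ioo (-c⁻¹) c⁻¹ →
        volume (Prod.mk s ⁻¹' {p : ℝ × (Fin n → ℝ) | c * |p.1| + g p.2 ≤ 1})
          = ENNReal.ofReal ((1 - c*|s|)^n) * volume Q1 := by
      intro s hs
      have h3 : |s| < c⁻¹ := abs_lt.mpr ⟨hs.1, hs.2⟩
      have h4 : c * |s| < 1 := by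
        have := mul_lt_mul_of_pos_left h3 hc
        rwa [mul_inv_cancel₀ hc.ne'] at this
      have : Prod.mk s ⁻¹' {p : ℝ × (Fin n → ℝ) | c * |p.1| + g p.2 ≤ 1}
          = {q | g q ≤ 1 - c*|s|} := by
        ext q; simp only [mem_preimage, mem_setOf_eq]; constructor <;> intro <;> linarith
      rw [this, vol_gauge_set g hgs (by linarith)]
    calc ∫⁻ s, volume (Prod.mk s ⁻¹' {p : ℝ × (Fin n → ℝ) | c * |p.1| + g p.2 ≤ 1})
          ≥ ∫⁻ s in Ioo (-c⁻¹) c⁻¹,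
            volume (Prod.mk s ⁻¹' {p : ℝ × (Fin n → ℝ) | c * |p.1| + g p.2 ≤ 1}) :=
        setLIntegral_le_lintegral _ _
      _ = ∫⁻ s in Ioo (-c⁻¹) c⁻¹, ENNReal.ofReal ((1 - c*|s|)^n) * volume Q1 := by
          apply setLIntegral_congr_fun measurableSet_Ioo
          intro s hs
          exact hslice s hs
      _ = ENNReal.ofReal (2/((n+1)*c)) * volume Q1 := by
          rw [lintegral_mul_const _ (by fun_prop), lint_integ n hc]
  -- combine
  rw [hXvol]
  calc ENNReal.ofReal 2 * (ENNReal.ofReal ((2*M)^n) * volume Q1)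
      = ENNReal.ofReal (2 * (2*M)^n) * volume Q1 := by
        rw [ENNReal.ofReal_mul (by norm_num), mul_assoc]
    _ ≤ ENNReal.ofReal (((n:ℝ)+1)^(n+1) * M^n * c * (2/((n+1)*c))) * volume Q1 := by
        apply mul_le_mul_left
        apply ENNReal.ofReal_le_ofReal
        have h2n : (2:ℝ)^n ≤ ((n:ℝ)+1)^n := by
          cases n with
          | zero => norm_num
          | succ k => exact pow_le_pow_left₀ (by norm_num) (by push_cast; linarith) _
        have : ((n:ℝ)+1)^(n+1) * M^n * c * (2/((n+1)*c)) = 2 * (((n:ℝ)+1)^n * M^n) := by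
          have hn1 : ((n:ℝ)+1) ≠ 0 := by positivity
          field_simp
          ring
        rw [this, mul_pow]
        nlinarith [pow_nonneg hM.le n, pow_nonneg (show (0:ℝ) ≤ 2 by norm_num) n]
    _ ≤ ENNReal.ofReal (((n:ℝ)+1)^(n+1) * M^n * c) *
        (ENNReal.ofReal (2/((n+1)*c)) * volume Q1) := by
        rw [ENNReal.ofReal_mul (by positivity), mul_assoc]
    _ ≤ _ := by exact mul_le_mul_right hGvol _

private lemma core {V : Type*} [NormedAddCommGroup V] [NormedSpace ℝ V] [MeasurableSpace V] [BorelSpace V]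
    (n : ℕ) (b : Basis (Fin (n+1)) ℝ V) (ν : Measure V) [hν : ν.IsAddHaarMeasure]
    (c M : ℝ) (hc : 0 < c) (hcM : c ≤ M) (hb0 : ‖b 0‖ = c) :
    ν {w : V | |b.coord 0 w| ≤ 1 ∧ ‖w - b.coord 0 w • b 0‖ ≤ 2*M}
      ≤ ENNReal.ofReal (((n:ℝ)+1)^(n+1) * M^n * c) * ν (Metric.closedBall 0 1) := by
  haveI : FiniteDimensional ℝ V := b.finiteDimensional_of_finite
  set Φ : V ≃L[ℝ] (Fin (n+1) → ℝ) := b.equivFun.toContinuousLinearEquiv with hΦ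
  have hΦsymm : ∀ a : Fin (n+1) → ℝ, (Φ.symm a : V) = ∑ i, a i • b i := by
    intro a
    show b.equivFun.symm a = _
    rw [Basis.equivFun_symm_apply]
  set me : V ≃ᵐ (Fin (n+1) → ℝ) := Φ.toHomeomorph.toMeasurableEquiv with hme
  have hcoe : (me : V → (Fin (n+1) → ℝ)) = Φ := rfl
  set μ₀ : Measure (Fin (n+1) → ℝ) := ν.map me with hμ₀
  haveI : μ₀.IsAddHaarMeasure := by
    rw [hμ₀, show (me : V → (Fin (n+1) → ℝ)) = Φ from rfl]
    exact Φ.isAddHaarMeasure_map ν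
  obtain ⟨k, hk⟩ : ∃ k : NNReal, μ₀ = k • (volume : Measure (Fin (n+1) → ℝ)) :=
    ⟨_, Measure.isAddLeftInvariant_eq_smul μ₀ volume⟩
  have hmeas : ∀ T : Set V, ν T = (k : ENNReal) * (volume : Measure (Fin (n+1) → ℝ)) (me.symm ⁻¹' T) := by
    intro T
    have h1 : ν T = μ₀ (me.symm ⁻¹' T) := by
      rw [hμ₀, MeasurableEquiv.map_apply]
      congr 1
      rw [← Set.preimage_comp]
      simp
    rw [h1, hk, Measure.smul_apply, ENNReal.smul_def, smul_eq_mul]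
  -- the gauge function
  set g : (Fin n → ℝ) → ℝ := fun q => ‖∑ i, q i • b i.succ‖ with hg
  have hgc : Continuous g := by
    apply Continuous.norm
    exact continuous_finset_sum _ fun i _ => (continuous_apply i).smul continuous_const
  have hgs : ∀ (t : ℝ) (q : Fin n → ℝ), g (t • q) = |t| * g q := by
    intro t q
    simp only [hg]
    rw [show ∑ i, (t • q) i • b i.succ = t • ∑ i, q i • b i.succ by
      rw [Finset.smul_sum]; exact Finset.sum_congr rfl fun i _ => by
        simp [smul_smul]]
    rw [norm_smul, Real.norm_eq_abs]
  -- identify preimages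
  have hcoord : ∀ a : Fin (n+1) → ℝ, b.coord 0 (Φ.symm a) = a 0 := by
    intro a
    have h := congrFun (b.equivFun.apply_symm_apply a) 0
    rw [Basis.equivFun_apply] at h
    rw [Basis.coord_apply]
    exact h
  have hsum : ∀ a : Fin (n+1) → ℝ,
      (Φ.symm a : V) - a 0 • b 0 = ∑ i : Fin n, a i.succ • b i.succ := by
    intro a
    rw [hΦsymm, Fin.sum_univ_succ]
    abel
  have hX : me.symm ⁻¹' {w : V | |b.coord 0 w| ≤ 1 ∧ ‖w - b.coord 0 w • b 0‖ ≤ 2*M}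
      = {a : Fin (n+1) → ℝ | |a 0| ≤ 1 ∧ g (fun i => a i.succ) ≤ 2*M} := by
    ext a
    have h1 : me.symm a = Φ.symm a := rfl
    simp only [mem_preimage, mem_setOf_eq, h1, hcoord, hsum]
    exact Iff.rfl
  have hXb : {a : Fin (n+1) → ℝ | c * |a 0| + g (fun i => a i.succ) ≤ 1}
      ⊆ me.symm ⁻¹' (Metric.closedBall (0:V) 1) := by
    intro a ha
    simp only [mem_setOf_eq] at ha
    simp only [mem_preimage, Metric.mem_closedBall, dist_zero_right]
    have h1 : (me.symm a : V) = Φ.symm a := rfl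
    rw [h1]
    calc ‖(Φ.symm a : V)‖ = ‖a 0 • b 0 + ((Φ.symm a : V) - a 0 • b 0)‖ := by
          congr 1; abel
      _ ≤ ‖a 0 • b 0‖ + ‖(Φ.symm a : V) - a 0 • b 0‖ := norm_add_le _ _
      _ = |a 0| * c + g (fun i => a i.succ) := by
          rw [norm_smul, Real.norm_eq_abs, hb0, hsum]
      _ ≤ 1 := by linarith [ha]
  rw [hmeas, hmeas, hX]
  calc (k : ENNReal) * volume {a : Fin (n+1) → ℝ | |a 0| ≤ 1 ∧ g (fun i => a i.succ) ≤ 2*M}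
      ≤ (k : ENNReal) * (ENNReal.ofReal (((n:ℝ)+1)^(n+1) * M^n * c) *
          volume {a : Fin (n+1) → ℝ | c * |a 0| + g (fun i => a i.succ) ≤ 1}) :=
        mul_le_mul_right (pi_core n g hgc hgs c M hc hcM) _
    _ ≤ (k : ENNReal) * (ENNReal.ofReal (((n:ℝ)+1)^(n+1) * M^n * c) *
          volume (me.symm ⁻¹' (Metric.closedBall (0:V) 1))) :=
        mul_le_mul_right (mul_le_mul_right (measure_mono hXb) _) _
    _ = ENNReal.ofReal (((n:ℝ)+1)^(n+1) * M^n * c) *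
          ((k : ENNReal) * volume (me.symm ⁻¹' (Metric.closedBall (0:V) 1))) := by
        ring

end AuxStatement17

set_option maxHeartbeats 1000000 in
/-- from the proof of Corollary 3.4 of the paper. Let `B` be a Banach
space, `m ∈ ℕ`, `K > 0`. There is `C = C(K, m) > 0` such that: if `A : B → B` is a bounded
operator with `|A| ≤ K` and `E` is an `m`-dimensional subspace on which `A` is injective,
then `|(A|_E)⁻¹| ≤ C / det(A|E)`; in fact for every unit vector `v ∈ E`,
`det(A|E) ≤ m^m |A|_E|^{m-1} |Av|`, so that one may take
`|(A|_E)⁻¹| ≤ m^m K^{m-1} / det(A|E)`. -/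
theorem statement17 {B : Type*} [NormedAddCommGroup B] [NormedSpace ℝ B] [CompleteSpace B]
    [MeasurableSpace B] [BorelSpace B]
    (m : ℕ) (K : ℝ) (hK : 0 < K) :
    ∃ C > (0 : ℝ),
      ∀ (A : B →L[ℝ] B) (E : Submodule ℝ B) [FiniteDimensional ℝ E],
        Module.finrank ℝ E = m → ‖A‖ ≤ K → (∀ v ∈ E, A v = 0 → v = 0) →
        ∀ (μE : MeasureTheory.Measure E)
          (ν : MeasureTheory.Measure (E.map A.toLinearMap)),
          BY.IsInducedVolume E m μE →
          BY.IsInducedVolume (E.map A.toLinearMap) m ν →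
          (∀ v ∈ E, ‖v‖ ≤ (C / BY.detIn A E (E.map A.toLinearMap) μE ν) * ‖A v‖) ∧
          (∀ v ∈ E, ‖v‖ = 1 →
            BY.detIn A E (E.map A.toLinearMap) μE ν ≤
              (m : ℝ) ^ m * BY.opNormOnSub A E ^ (m - 1) * ‖A v‖) ∧
          (∀ v ∈ E, ‖v‖ ≤
            ((m : ℝ) ^ m * K ^ (m - 1) / BY.detIn A E (E.map A.toLinearMap) μE ν) *
              ‖A v‖) := by
  have hmm : (0:ℝ) < (m:ℝ)^m := by
    rcases Nat.eq_zero_or_pos m with h | h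
    · subst h; norm_num
    · exact pow_pos (by exact_mod_cast h) m
  refine ⟨(m:ℝ)^m * K^(m-1), mul_pos hmm (pow_pos hK _), ?_⟩
  intro A E _ hrank hAK hinj μE ν hμE hν
  -- trivial case m = 0
  rcases Nat.eq_zero_or_pos m with hm0 | hmpos
  · have hEbot : E = ⊥ := Submodule.finrank_eq_zero.mp (by rw [hrank, hm0])
    have hz : ∀ v ∈ E, v = 0 := by
      intro v hv; rw [hEbot] at hv; simpa using hv
    refine ⟨?_, ?_, ?_⟩
    · intro v hv; rw [hz v hv]; simp
    · intro v hv hv1; rw [hz v hv] at hv1; simp at hv1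
    · intro v hv; rw [hz v hv]; simp
  obtain ⟨n, rfl⟩ : ∃ n, m = n + 1 := ⟨m - 1, (Nat.succ_pred_eq_of_pos hmpos).symm⟩
  clear hmpos hmm
  -- the restricted equivalence
  have hmem : ∀ x : E, A x ∈ E.map A.toLinearMap := fun x => Submodule.mem_map_of_mem x.2
  set f1 : E →ₗ[ℝ] (E.map A.toLinearMap) :=
    LinearMap.codRestrict (E.map A.toLinearMap) (A.toLinearMap.domRestrict E) hmem with hf1
  have hf1app : ∀ x : E, (f1 x : B) = A (x : B) := fun x => rfl
  have hf1inj : Function.Injective f1 := by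
    intro x y hxy
    have h1 : A ((x:B) - (y:B)) = 0 := by
      rw [map_sub]
      have := congrArg (fun z : E.map A.toLinearMap => (z : B)) hxy
      simp only [hf1app] at this
      rw [this, sub_self]
    have h2 : (x:B) - (y:B) ∈ E := sub_mem x.2 y.2
    have h3 := hinj _ h2 h1
    exact Subtype.ext (sub_eq_zero.mp h3)
  have hf1surj : Function.Surjective f1 := by
    rintro ⟨w, hw⟩
    obtain ⟨x, hxE, hxw⟩ := hw
    exact ⟨⟨x, hxE⟩, Subtype.ext hxw⟩
  set φ : E ≃ₗ[ℝ] (E.map A.toLinearMap) := LinearEquiv.ofBijective f1 ⟨hf1inj, hf1surj⟩ with hφ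
  have hφapp : ∀ x : E, (φ x : B) = A (x : B) := fun x => rfl
  haveI : FiniteDimensional ℝ (E.map A.toLinearMap) := LinearEquiv.finiteDimensional φ
  haveI : BorelSpace (E.map A.toLinearMap) := Subtype.borelSpace _
  haveI hνH : ν.IsAddHaarMeasure := hν.1
  -- opNormOnSub facts
  set M := BY.opNormOnSub A E with hM
  have hMbdd : BddAbove {r : ℝ | ∃ v ∈ E, ‖v‖ ≤ 1 ∧ r = ‖A v‖} := by
    refine ⟨K, ?_⟩
    rintro r ⟨v, hv, hv1, rfl⟩
    calc ‖A v‖ ≤ ‖A‖ * ‖v‖ := A.le_opNorm v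
      _ ≤ K * 1 := mul_le_mul hAK hv1 (norm_nonneg v) hK.le
      _ = K := mul_one K
  have hMne : {r : ℝ | ∃ v ∈ E, ‖v‖ ≤ 1 ∧ r = ‖A v‖}.Nonempty :=
    ⟨‖A (0:B)‖, 0, zero_mem E, by simp, rfl⟩
  have hMle1 : ∀ u ∈ E, ‖u‖ ≤ 1 → ‖A u‖ ≤ M :=
    fun u hu h1 => le_csSup hMbdd ⟨u, hu, h1, rfl⟩
  have hMK : M ≤ K := csSup_le hMne (by
    rintro r ⟨v, hv, hv1, rfl⟩
    calc ‖A v‖ ≤ ‖A‖ * ‖v‖ := A.le_opNorm v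
      _ ≤ K * 1 := mul_le_mul hAK hv1 (norm_nonneg v) hK.le
      _ = K := mul_one K)
  have hM0 : 0 ≤ M := by
    have := hMle1 0 (zero_mem E) (by simp)
    simpa using this
  have hMnorm : ∀ u ∈ E, ‖A u‖ ≤ M * ‖u‖ := by
    intro u hu
    rcases eq_or_ne u 0 with rfl | hu0
    · simp
    · have hun : 0 < ‖u‖ := norm_pos_iff.mpr hu0
      have h1 : ‖A (‖u‖⁻¹ • u)‖ ≤ M :=
        hMle1 _ (Submodule.smul_mem E _ hu) (by
          rw [norm_smul, norm_inv, norm_norm, inv_mul_cancel₀ hun.ne'])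
      rw [ContinuousLinearMap.map_smul, norm_smul, norm_inv, norm_norm] at h1
      calc ‖A u‖ = ‖u‖ * (‖u‖⁻¹ * ‖A u‖) := by field_simp
        _ ≤ ‖u‖ * M := mul_le_mul_of_nonneg_left h1 hun.le
        _ = M * ‖u‖ := mul_comm _ _
  -- euclidean ball volume facts
  have hω_pos : 0 < BY.euclideanBallVol (n+1) := by
    unfold BY.euclideanBallVol
    exact lt_of_lt_of_le (measure_ball_pos volume _ one_pos)
      (measure_mono Metric.ball_subset_closedBall)
  have hω_fin : BY.euclideanBallVol (n+1) ≠ ⊤ := by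
    unfold BY.euclideanBallVol
    exact (isCompact_closedBall _ _).measure_lt_top.ne
  have hωt : 0 < (BY.euclideanBallVol (n+1)).toReal :=
    ENNReal.toReal_pos hω_pos.ne' hω_fin
  -- numerator set
  set S : Set (E.map A.toLinearMap) := {w : E.map A.toLinearMap | ∃ v : B, v ∈ E ∧ ‖v‖ ≤ 1 ∧ A v = (w : B)} with hS
  have hdet : BY.detIn A E (E.map A.toLinearMap) μE ν = (ν S).toReal / (BY.euclideanBallVol (n+1)).toReal := by
    rw [BY.detIn, hμE.2]
  have hS_fin : ν S ≠ ⊤ := by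
    have hsub : S ⊆ Metric.closedBall (0 : E.map A.toLinearMap) K := by
      rintro w ⟨v, hv, hv1, hAv⟩
      rw [Metric.mem_closedBall, dist_zero_right]
      show ‖(w : B)‖ ≤ K
      rw [← hAv]
      calc ‖A v‖ ≤ ‖A‖ * ‖v‖ := A.le_opNorm v
        _ ≤ K * 1 := mul_le_mul hAK hv1 (norm_nonneg v) hK.le
        _ = K := mul_one K
    exact ((measure_mono hsub).trans_lt (isCompact_closedBall _ _).measure_lt_top).ne
  have hS_pos : 0 < ν S := by
    set T : (E.map A.toLinearMap) →L[ℝ] E := LinearMap.toContinuousLinearMap φ.symm.toLinearMap with hT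
    have hr : (0:ℝ) < (‖T‖ + 1)⁻¹ := by positivity
    have hsub : Metric.ball (0 : E.map A.toLinearMap) (‖T‖+1)⁻¹ ⊆ S := by
      intro w hw
      rw [Metric.mem_ball, dist_zero_right] at hw
      refine ⟨(φ.symm w : B), (φ.symm w).2, ?_, ?_⟩
      · have h1 : ‖φ.symm w‖ = ‖T w‖ := rfl
        show ‖(φ.symm w : E)‖ ≤ 1
        rw [h1]
        calc ‖T w‖ ≤ ‖T‖ * ‖w‖ := T.le_opNorm w
          _ ≤ ‖T‖ * (‖T‖+1)⁻¹ := by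
              apply mul_le_mul_of_nonneg_left hw.le (norm_nonneg T)
          _ ≤ 1 := by
              rw [mul_inv_le_iff₀ (by positivity), one_mul]
              linarith
      · rw [← hφapp (φ.symm w), φ.apply_symm_apply]
    calc (0:ENNReal) < ν (Metric.ball (0 : E.map A.toLinearMap) (‖T‖+1)⁻¹) :=
          Metric.isOpen_ball.measure_pos ν (Metric.nonempty_ball.mpr hr)
      _ ≤ ν S := measure_mono hsub
  have hd_pos : 0 < BY.detIn A E (E.map A.toLinearMap) μE ν := by
    rw [hdet]
    exact div_pos (ENNReal.toReal_pos hS_pos.ne' hS_fin) hωt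
  -- THE KEY CLAIM
  have claim2 : ∀ v ∈ E, ‖v‖ = 1 →
      BY.detIn A E (E.map A.toLinearMap) μE ν ≤ ((n+1:ℕ) : ℝ)^(n+1) * M^n * ‖A v‖ := by
    intro v hvE hv1
    have hv0 : v ≠ 0 := by intro h; rw [h, norm_zero] at hv1; exact zero_ne_one hv1
    have hAv0 : A v ≠ 0 := fun h => hv0 (hinj v hvE h)
    have hc : 0 < ‖A v‖ := norm_pos_iff.mpr hAv0
    have hcM : ‖A v‖ ≤ M := hMle1 v hvE (le_of_eq hv1)
    obtain ⟨ψ, hψ1, hψv⟩ := exists_dual_vector ℝ v (norm_ne_zero_iff.mpr hv0)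
    have hψv1 : ψ v = 1 := by rw [hv1] at hψv; exact_mod_cast hψv
    set ψE : E →ₗ[ℝ] ℝ := ψ.toLinearMap.comp E.subtype with hψE
    set vE : E := ⟨v, hvE⟩ with hvE'
    have hψvE : ψE vE = 1 := hψv1
    have hker : finrank ℝ (LinearMap.ker ψE) = n := by
      have h1 := LinearMap.finrank_range_add_finrank_ker ψE
      have h2 : LinearMap.range ψE = ⊤ := LinearMap.range_eq_top.mpr (fun r =>
        ⟨r • vE, by rw [LinearMap.map_smul, hψvE, smul_eq_mul, mul_one]⟩)
      rw [h2, finrank_top, Module.finrank_self, hrank] at h1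
      omega
    set bker : Basis (Fin n) ℝ (LinearMap.ker ψE) := Module.finBasisOfFinrankEq ℝ _ hker
      with hbker
    set fam : Fin (n+1) → E := Fin.cons vE (fun i => ((bker i : E))) with hfam
    have hli : LinearIndependent ℝ fam := by
      rw [hfam, linearIndependent_fin_cons]
      constructor
      · have h3 := bker.linearIndependent
        exact h3.map' (LinearMap.ker ψE).subtype (Submodule.ker_subtype _)
      · intro hmem2
        have hle : Submodule.span ℝ (Set.range fun i => ((bker i : E)))
            ≤ LinearMap.ker ψE := by
          rw [Submodule.span_le]
          rintro x ⟨i, rfl⟩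
          exact (bker i).2
        have h4 := hle hmem2
        rw [LinearMap.mem_ker, hψvE] at h4
        exact one_ne_zero h4
    have hcard : Fintype.card (Fin (n+1)) = finrank ℝ E := by rw [Fintype.card_fin, hrank]
    set bE : Basis (Fin (n+1)) ℝ E := basisOfLinearIndependentOfCardEqFinrank hli hcard
      with hbE'
    have hbE : ⇑bE = fam := coe_basisOfLinearIndependentOfCardEqFinrank hli hcard
    have hbE0 : bE 0 = vE := by rw [hbE, hfam]; exact Fin.cons_zero _ _
    have hbEs : ∀ i : Fin n, bE i.succ = ((bker i : E)) := by
      intro i; rw [hbE, hfam]; exact Fin.cons_succ _ _ _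
    set bF : Basis (Fin (n+1)) ℝ (E.map A.toLinearMap) := bE.map φ with hbF'
    have hbF0 : ((bF 0 : E.map A.toLinearMap) : B) = A v := by
      rw [hbF', Basis.map_apply, hφapp, hbE0]
    have hbF0n : ‖bF 0‖ = ‖A v‖ := by
      show ‖((bF 0 : E.map A.toLinearMap) : B)‖ = ‖A v‖
      rw [hbF0]
    have h1 : bE.coord 0 = ψE := by
      apply bE.ext
      intro i
      induction i using Fin.cases with
      | zero =>
          rw [Basis.coord_apply, Basis.repr_self, hbE0, hψvE]
          simp
      | succ i =>
          rw [Basis.coord_apply, Basis.repr_self, hbEs i]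
          have h5 : ψE ((bker i : E)) = 0 := (bker i).2
          rw [h5]
          exact Finsupp.single_eq_of_ne' (Fin.succ_ne_zero i)
    have hcoord : ∀ x : E, bF.coord 0 (φ x) = ψE x := by
      intro x
      have h2 : bF.coord 0 (φ x) = bE.coord 0 x := by
        rw [Basis.coord_apply, Basis.coord_apply, hbF', Basis.map_repr]
        simp
      rw [h2, h1]
    -- inclusion of S in the slab
    have hslab : S ⊆ {w : E.map A.toLinearMap |
        |bF.coord 0 w| ≤ 1 ∧ ‖w - bF.coord 0 w • bF 0‖ ≤ 2*M} := by
      rintro w ⟨u, huE, hu1, hAu⟩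
      have hw : φ ⟨u, huE⟩ = w := Subtype.ext (by rw [hφapp]; exact hAu)
      have hco : bF.coord 0 w = ψ u := by rw [← hw, hcoord]; rfl
      constructor
      · rw [hco]
        calc |ψ u| = ‖ψ u‖ := (Real.norm_eq_abs _).symm
          _ ≤ ‖ψ‖ * ‖u‖ := ψ.le_opNorm u
          _ ≤ 1 * 1 := mul_le_mul (le_of_eq hψ1) hu1 (norm_nonneg u) zero_le_one
          _ = 1 := one_mul 1
      · rw [hco]
        have hmem3 : u - ψ u • v ∈ E := sub_mem huE (Submodule.smul_mem E _ hvE)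
        have hcoe : ((w - ψ u • bF 0 : E.map A.toLinearMap) : B) = A (u - ψ u • v) := by
          push_cast
          rw [hbF0, ← hAu, map_sub, ContinuousLinearMap.map_smul]
        have hnn : ‖w - ψ u • bF 0‖ = ‖A (u - ψ u • v)‖ := by
          show ‖((w - ψ u • bF 0 : E.map A.toLinearMap) : B)‖ = _
          rw [hcoe]
        rw [hnn]
        have h8 : ‖u - ψ u • v‖ ≤ 2 := by
          calc ‖u - ψ u • v‖ ≤ ‖u‖ + ‖ψ u • v‖ := norm_sub_le _ _
            _ = ‖u‖ + |ψ u| * ‖v‖ := by rw [norm_smul, Real.norm_eq_abs]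
            _ ≤ 1 + 1 * 1 := by
                have h9 : |ψ u| ≤ 1 := by
                  calc |ψ u| = ‖ψ u‖ := (Real.norm_eq_abs _).symm
                    _ ≤ ‖ψ‖ * ‖u‖ := ψ.le_opNorm u
                    _ ≤ 1 * 1 := mul_le_mul (le_of_eq hψ1) hu1 (norm_nonneg u) zero_le_one
                    _ = 1 := one_mul 1
                have h10 : ‖v‖ ≤ 1 := le_of_eq hv1
                have := norm_nonneg v
                nlinarith
            _ = 2 := by norm_num
        calc ‖A (u - ψ u • v)‖ ≤ M * ‖u - ψ u • v‖ := hMnorm _ hmem3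
          _ ≤ M * 2 := mul_le_mul_of_nonneg_left h8 hM0
          _ = 2 * M := mul_comm _ _
    -- apply the core volume estimate
    have hcore := core n bF ν (‖A v‖) M hc hcM hbF0n
    have hball : ν (Metric.closedBall (0 : E.map A.toLinearMap) 1)
        = BY.euclideanBallVol (n+1) := by
      rw [← hν.2]
      congr 1
      ext w
      simp [Metric.mem_closedBall, dist_zero_right]
    have hfinal : ν S ≤ ENNReal.ofReal (((n:ℝ)+1)^(n+1) * M^n * ‖A v‖)
        * BY.euclideanBallVol (n+1) := by
      rw [← hball]
      exact (measure_mono hslab).trans hcore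
    have hD0 : 0 ≤ ((n:ℝ)+1)^(n+1) * M^n * ‖A v‖ := by positivity
    have hDfin : ENNReal.ofReal (((n:ℝ)+1)^(n+1) * M^n * ‖A v‖)
        * BY.euclideanBallVol (n+1) ≠ ⊤ :=
      ENNReal.mul_ne_top ENNReal.ofReal_ne_top hω_fin
    have h7 := ENNReal.toReal_mono hDfin hfinal
    rw [ENNReal.toReal_mul, ENNReal.toReal_ofReal hD0] at h7
    rw [hdet, div_le_iff₀ hωt]
    calc (ν S).toReal
        ≤ (((n:ℝ)+1)^(n+1) * M^n * ‖A v‖) * (BY.euclideanBallVol (n+1)).toReal := h7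
      _ = ((n+1:ℕ):ℝ)^(n+1) * M^n * ‖A v‖ * (BY.euclideanBallVol (n+1)).toReal := by
          push_cast
          ring
  -- derive the remaining bullets
  have claim13 : ∀ v ∈ E,
      ‖v‖ ≤ (((n+1:ℕ):ℝ)^(n+1) * K^((n+1)-1) / BY.detIn A E (E.map A.toLinearMap) μE ν) * ‖A v‖ := by
    intro v hvE
    rcases eq_or_ne v 0 with rfl | hv0
    · simp
    · have hvpos : 0 < ‖v‖ := norm_pos_iff.mpr hv0
      have huE : ‖v‖⁻¹ • v ∈ E := Submodule.smul_mem E _ hvE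
      have hu1 : ‖(‖v‖⁻¹ • v)‖ = 1 := by
        rw [norm_smul, norm_inv, norm_norm, inv_mul_cancel₀ hvpos.ne']
      have h2 := claim2 _ huE hu1
      rw [ContinuousLinearMap.map_smul, norm_smul, norm_inv, norm_norm] at h2
      have h3 : BY.detIn A E (E.map A.toLinearMap) μE ν ≤ ((n+1:ℕ):ℝ)^(n+1) * K^n * (‖v‖⁻¹ * ‖A v‖) := by
        refine h2.trans ?_
        have h5 : M^n ≤ K^n := pow_le_pow_left₀ hM0 hMK n
        have hAv0 : 0 ≤ ‖v‖⁻¹ * ‖A v‖ := by positivity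
        have hb : (0:ℝ) ≤ ((n+1:ℕ):ℝ)^(n+1) := by positivity
        have h6 := mul_le_mul_of_nonneg_right (mul_le_mul_of_nonneg_left h5 hb) hAv0
        linarith [h6]
      rw [div_mul_eq_mul_div, le_div_iff₀ hd_pos]
      have h4 := mul_le_mul_of_nonneg_left h3 hvpos.le
      calc ‖v‖ * BY.detIn A E (E.map A.toLinearMap) μE ν
          ≤ ‖v‖ * (((n+1:ℕ):ℝ)^(n+1) * K^n * (‖v‖⁻¹ * ‖A v‖)) := h4
        _ = ((n+1:ℕ):ℝ)^(n+1) * K^n * ‖A v‖ := by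
              field_simp
        _ = ((n+1:ℕ):ℝ)^(n+1) * K^((n+1)-1) * ‖A v‖ := by norm_num
  refine ⟨claim13, ?_, claim13⟩
  intro v hvE hv1
  have := claim2 v hvE hv1
  calc BY.detIn A E (E.map A.toLinearMap) μE ν ≤ ((n+1:ℕ):ℝ)^(n+1) * M^n * ‖A v‖ := this
    _ = ((n+1:ℕ):ℝ)^(n+1) * M^((n+1)-1) * ‖A v‖ := by norm_num
end

section
/- Let Z be a compact metric space of finite box-counting dimension; concretely, assume there are constants C > 0 and d ≥ 0 such that for every r ∈ (0, 1], Z admits a finite cover by at most C r^{−(d+1)} balls of radius r. Let T : Z → Z be a homeomorphism, let m be a T-invariant Borel probability measure on Z, and let ρ : Z → (0, 1) be measurable with log ρ ∈ L¹(m). Then there exists a countable Borel partition P of Z with finite entropy, H_m(P) = Σ_{P ∈ P} −m(P) log m(P) < ∞, such that for m-almost every x ∈ Z, the partition element P(x) containing x satisfies P(x) ⊂ B(x, ρ(x)), the ball of radius ρ(x) centered at x. -/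
open MeasureTheory Filter Metric Module Submodule Set

lemma phi_le_aux {a c : ℝ} (ha0 : 0 ≤ a) (hc : 1 ≤ c) :
    -(a * Real.log a) ≤ a * c + c * Real.exp (-c) := by
  have hc0 : (0:ℝ) ≤ c := le_trans zero_le_one hc
  have hexp : 0 < Real.exp (-c) := Real.exp_pos _
  rcases eq_or_lt_of_le ha0 with h0 | h0
  · simp [← h0]
    positivity
  by_cases h : Real.exp (-c) ≤ a
  · have hla : -c ≤ Real.log a := by
      have := Real.log_le_log (Real.exp_pos _) h
      simpa [Real.log_exp] using this
    nlinarith [mul_nonneg hc0 hexp.le]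
  · push_neg at h
    have hb : Real.log (Real.exp (-c) / a) ≤ Real.exp (-c) / a - 1 :=
      Real.log_le_sub_one_of_pos (by positivity)
    have hlogdiv : Real.log (Real.exp (-c) / a) = -c - Real.log a := by
      rw [Real.log_div (ne_of_gt hexp) (ne_of_gt h0), Real.log_exp]
    rw [hlogdiv] at hb
    have h3 : a * (-c - Real.log a) ≤ a * (Real.exp (-c) / a - 1) :=
      mul_le_mul_of_nonneg_left hb ha0
    have h4 : a * (Real.exp (-c) / a - 1) = Real.exp (-c) - a := by
      field_simp
    rw [h4] at h3
    nlinarith [mul_nonneg (sub_nonneg.2 hc) hexp.le, mul_nonneg ha0 hc0]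

/-- Lemma 6.13 of the paper, following Mañé. Let `Z` be a compact metric
space of finite box-counting dimension: there are `C > 0`, `d ≥ 0` such that for every
`r ∈ (0, 1]`, `Z` admits a finite cover by at most `C r^{-(d+1)}` balls of radius `r`.
Let `T : Z → Z` be a homeomorphism, `m` a `T`-invariant Borel probability measure, and
`ρ : Z → (0, 1)` measurable with `log ρ ∈ L¹(m)`. Then there is a countable Borel
partition `P` of `Z` with finite entropy such that for `m`-a.e. `x`, `P(x) ⊆ B(x, ρ(x))`. -/
theorem statement19 {Z : Type*} [MetricSpace Z] [CompactSpace Z]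
    [MeasurableSpace Z] [BorelSpace Z]
    (C d : ℝ) (hC : 0 < C) (hd : 0 ≤ d)
    (hcover : ∀ r : ℝ, 0 < r → r ≤ 1 → ∃ s : Finset Z,
      (s.card : ℝ) ≤ C * r ^ (-(d + 1)) ∧
      (Set.univ : Set Z) ⊆ ⋃ z ∈ s, Metric.ball z r)
    (T : Z ≃ₜ Z)
    (m : MeasureTheory.Measure Z) [MeasureTheory.IsProbabilityMeasure m]
    (hpres : MeasureTheory.MeasurePreserving T m m)
    (ρ : Z → ℝ) (hρm : Measurable ρ) (hρ : ∀ x, ρ x ∈ Set.Ioo (0 : ℝ) 1)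
    (hint : MeasureTheory.Integrable (fun x => Real.log (ρ x)) m) :
    ∃ P : ℕ → Set Z,
      (∀ n, MeasurableSet (P n)) ∧
      (∀ i j, i ≠ j → Disjoint (P i) (P j)) ∧
      (⋃ n, P n) = Set.univ ∧
      Summable (fun n => -((m (P n)).toReal * Real.log ((m (P n)).toReal))) ∧
      ∀ᵐ x ∂m, ∀ n, x ∈ P n → P n ⊆ Metric.ball x (ρ x) := by
  classical
  -- Z is nonempty
  have hne : Nonempty Z := by
    by_contra h
    have h0 : (univ : Set Z) = ∅ := Set.univ_eq_empty_iff.2 (not_nonempty_iff.mp h)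
    have h1 : m univ = 1 := measure_univ
    rw [h0] at h1
    simp at h1
  obtain ⟨z₀⟩ := hne
  -- the integrable function L = -log ρ
  have hL0 : ∀ x, 0 < -Real.log (ρ x) := fun x =>
    neg_pos.2 (Real.log_neg (hρ x).1 (hρ x).2)
  have hLint : Integrable (fun x => -Real.log (ρ x)) m := hint.neg
  -- level sets
  set U : ℕ → Set Z :=
    fun n => ρ ⁻¹' Set.Ioc (Real.exp (-((n:ℝ)+1))) (Real.exp (-(n:ℝ))) with hUdef
  have hUmem : ∀ n x, x ∈ U n ↔
      (Real.exp (-((n:ℝ)+1)) < ρ x ∧ ρ x ≤ Real.exp (-(n:ℝ))) := fun n x => Iff.rfl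
  have hUmeas : ∀ n, MeasurableSet (U n) := fun n => hρm measurableSet_Ioc
  have hUdisj : ∀ i j : ℕ, i ≠ j → Disjoint (U i) (U j) := by
    intro i j hij
    rw [Set.disjoint_left]
    intro x hxi hxj
    obtain ⟨h1, h2⟩ := (hUmem i x).1 hxi
    obtain ⟨h3, h4⟩ := (hUmem j x).1 hxj
    rcases hij.lt_or_gt with h | h
    · have hij' : (i:ℝ) + 1 ≤ (j:ℝ) := by exact_mod_cast h
      have : ρ x ≤ Real.exp (-((i:ℝ)+1)) := h4.trans (Real.exp_le_exp.2 (by linarith))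
      linarith
    · have hij' : (j:ℝ) + 1 ≤ (i:ℝ) := by exact_mod_cast h
      have : ρ x ≤ Real.exp (-((j:ℝ)+1)) := h2.trans (Real.exp_le_exp.2 (by linarith))
      linarith
  have hUcover : ∀ x : Z, x ∈ U ⌊-Real.log (ρ x)⌋₊ := by
    intro x
    set t : ℝ := -Real.log (ρ x) with ht
    have h1 : (⌊t⌋₊ : ℝ) ≤ t := Nat.floor_le (hL0 x).le
    have h2 : t < ⌊t⌋₊ + 1 := Nat.lt_floor_add_one t
    rw [hUmem]
    have hρx : ρ x = Real.exp (Real.log (ρ x)) := (Real.exp_log (hρ x).1).symm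
    constructor
    · rw [hρx]
      exact Real.exp_lt_exp.2 (by simp only [ht] at h2 ⊢; linarith)
    · rw [hρx]
      exact Real.exp_le_exp.2 (by simp only [ht] at h1 ⊢; linarith)
  -- covers at scale r n = exp(-(n+2))
  set r : ℕ → ℝ := fun n => Real.exp (-((n:ℝ)+2)) with hrdef
  have hr0 : ∀ n, 0 < r n := fun n => Real.exp_pos _
  have hr1 : ∀ n, r n ≤ 1 := fun n => Real.exp_le_one_iff.2 (neg_nonpos.2 (by positivity))
  have hex : ∀ n : ℕ, ∃ s : Finset Z, (s.card : ℝ) ≤ C * (r n) ^ (-(d + 1)) ∧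
      (Set.univ : Set Z) ⊆ ⋃ z ∈ s, Metric.ball z (r n) :=
    fun n => hcover (r n) (hr0 n) (hr1 n)
  choose s hscard hscov using hex
  set K : ℕ → ℕ := fun n => (s n).card with hKdef
  set w : ℕ → ℕ → Z := fun n k => ((s n).toList).getD k z₀ with hwdef
  -- cover restated
  have hcov' : ∀ (n : ℕ) (x : Z), ∃ k, k < K n ∧ x ∈ Metric.ball (w n k) (r n) := by
    intro n x
    have := hscov n (Set.mem_univ x)
    simp only [Set.mem_iUnion] at this
    obtain ⟨z, hz, hxz⟩ := this
    have hzl : z ∈ (s n).toList := (Finset.mem_toList).2 hz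
    obtain ⟨k, hk, hkz⟩ := List.mem_iff_getElem.1 hzl
    refine ⟨k, ?_, ?_⟩
    · simpa [hKdef, Finset.length_toList] using hk
    · have : w n k = z := by
        simp only [hwdef]
        rw [List.getD_eq_getElem _ _ hk, hkz]
      rwa [this]
  -- disjointified cover pieces
  set V : ℕ → ℕ → Set Z :=
    fun n k => Metric.ball (w n k) (r n) \ ⋃ j < k, Metric.ball (w n j) (r n) with hVdef
  have hVmeas : ∀ n k, MeasurableSet (V n k) :=
    fun n k => measurableSet_ball.diff
      (MeasurableSet.biUnion (Set.to_countable _) fun j _ => measurableSet_ball)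
  have hVempty : ∀ n k, K n ≤ k → V n k = ∅ := by
    intro n k hk
    ext x
    simp only [hVdef, Set.mem_diff, Set.mem_iUnion, Set.mem_empty_iff_false, iff_false,
      not_and, not_not]
    intro _
    obtain ⟨j, hj, hxj⟩ := hcov' n x
    exact ⟨j, lt_of_lt_of_le hj hk, hxj⟩
  -- the pieces, indexed by pairs
  set Q : ℕ × ℕ → Set Z := fun p => U p.1 ∩ V p.1 p.2 with hQdef
  have hQmeas : ∀ p, MeasurableSet (Q p) := fun p => (hUmeas p.1).inter (hVmeas p.1 p.2)
  have hQdisj : ∀ p q : ℕ × ℕ, p ≠ q → Disjoint (Q p) (Q q) := by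
    intro p q hpq
    rw [Set.disjoint_left]
    intro x hxp hxq
    rcases eq_or_ne p.1 q.1 with h1 | h1
    · have h2 : p.2 ≠ q.2 := by
        intro h2; exact hpq (Prod.ext h1 h2)
      have hVdisj : ∀ (n : ℕ) (k k' : ℕ), k < k' → x ∈ V n k → x ∈ V n k' → False := by
        intro n k k' hkk' hk hk'
        exact hk'.2 (Set.mem_biUnion hkk' hk.1)
      rcases h2.lt_or_gt with h | h
      · exact hVdisj p.1 p.2 q.2 h hxp.2 (h1 ▸ hxq.2)
      · exact hVdisj p.1 q.2 p.2 h (h1 ▸ hxq.2) hxp.2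
    · exact Set.disjoint_left.1 (hUdisj p.1 q.1 h1) hxp.1 hxq.1
  have hQunion : (⋃ p : ℕ × ℕ, Q p) = univ := by
    ext x
    simp only [Set.mem_iUnion, Set.mem_univ, iff_true]
    set n := ⌊-Real.log (ρ x)⌋₊ with hn
    have hxU : x ∈ U n := hUcover x
    have hexk : ∃ k, x ∈ Metric.ball (w n k) (r n) := by
      obtain ⟨k, _, hk⟩ := hcov' n x
      exact ⟨k, hk⟩
    refine ⟨(n, Nat.find hexk), hxU, Nat.find_spec hexk, ?_⟩
    simp only [Set.mem_iUnion]
    rintro ⟨j, hj, hxj⟩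
    exact Nat.find_min hexk hj hxj
  -- small diameter: every piece containing x sits in B(x, ρ x)
  have hQsmall : ∀ (p : ℕ × ℕ) (x : Z), x ∈ Q p → Q p ⊆ Metric.ball x (ρ x) := by
    rintro ⟨n, k⟩ x hx y hy
    have hxb : dist x (w n k) < r n := hx.2.1
    have hyb : dist y (w n k) < r n := hy.2.1
    have hρx : Real.exp (-((n:ℝ)+1)) < ρ x := ((hUmem n x).1 hx.1).1
    have h2r : 2 * r n < Real.exp (-((n:ℝ)+1)) := by
      have : Real.exp (-((n:ℝ)+1)) = Real.exp 1 * r n := by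
        rw [hrdef, ← Real.exp_add]; ring_nf
      rw [this]
      have he : (2:ℝ) < Real.exp 1 := by
        have := Real.add_one_le_exp (1:ℝ)
        nlinarith [Real.exp_pos (1:ℝ), Real.add_one_lt_exp (x := (1:ℝ)) one_ne_zero]
      nlinarith [hr0 n]
    have : dist y x < 2 * r n := by
      calc dist y x ≤ dist y (w n k) + dist (w n k) x := dist_triangle _ _ _
        _ = dist y (w n k) + dist x (w n k) := by rw [dist_comm (w n k) x]
        _ < r n + r n := add_lt_add hyb hxb
        _ = 2 * r n := by ring
    exact Metric.mem_ball.2 (by linarith)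
  -- measures of pieces
  set a : ℕ × ℕ → ℝ := fun p => (m (Q p)).toReal with hadef
  have ha0 : ∀ p, 0 ≤ a p := fun p => ENNReal.toReal_nonneg
  have ha1 : ∀ p, a p ≤ 1 := by
    intro p
    have h := prob_le_one (μ := m) (s := Q p)
    have := ENNReal.toReal_mono (by norm_num) h
    simpa using this
  -- entropy summand
  set F : ℕ × ℕ → ℝ := fun p => -(a p * Real.log (a p)) with hFdef
  have hF0 : ∀ p, 0 ≤ F p := by
    intro p
    have : a p * Real.log (a p) ≤ 0 :=
      mul_nonpos_of_nonneg_of_nonpos (ha0 p) (Real.log_nonpos (ha0 p) (ha1 p))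
    simpa [hFdef] using neg_nonneg.2 this
  have hFzero : ∀ n k, K n ≤ k → F (n, k) = 0 := by
    intro n k hk
    have : Q (n, k) = ∅ := by
      simp [hQdef, hVempty n k hk]
    simp [hFdef, hadef, this]
  -- constants
  set c : ℕ → ℝ := fun n => |Real.log C| + (d + 2) * ((n:ℝ) + 2) with hcdef
  have hc1 : ∀ n, 1 ≤ c n := by
    intro n
    have : (0:ℝ) ≤ |Real.log C| := abs_nonneg _
    have hn : (0:ℝ) ≤ (n:ℝ) := Nat.cast_nonneg n
    simp only [hcdef]
    nlinarith
  have hc0 : ∀ n, 0 ≤ c n := fun n => le_trans zero_le_one (hc1 n)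
  -- key count bound : K n * exp(-(c n)) ≤ exp(-(n+2))
  have hKbound : ∀ n, (K n : ℝ) * Real.exp (-(c n)) ≤ Real.exp (-((n:ℝ)+2)) := by
    intro n
    have hrpow : (r n) ^ (-(d + 1)) = Real.exp (((n:ℝ)+2) * (d+1)) := by
      rw [Real.rpow_def_of_pos (hr0 n), hrdef, Real.log_exp]
      ring_nf
    have h1 : (K n : ℝ) ≤ Real.exp (Real.log C + ((n:ℝ)+2) * (d+1)) := by
      have := hscard n
      rw [hrpow] at this
      calc (K n : ℝ) ≤ C * Real.exp (((n:ℝ)+2) * (d+1)) := this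
        _ = Real.exp (Real.log C + ((n:ℝ)+2) * (d+1)) := by
            rw [Real.exp_add, Real.exp_log hC]
    calc (K n : ℝ) * Real.exp (-(c n))
        ≤ Real.exp (Real.log C + ((n:ℝ)+2) * (d+1)) * Real.exp (-(c n)) := by
          exact mul_le_mul_of_nonneg_right h1 (Real.exp_pos _).le
      _ = Real.exp (Real.log C + ((n:ℝ)+2) * (d+1) - c n) := by
          rw [← Real.exp_add]; ring_nf
      _ ≤ Real.exp (-((n:ℝ)+2)) := by
          apply Real.exp_le_exp.2
          have : Real.log C ≤ |Real.log C| := le_abs_self _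
          simp only [hcdef]
          nlinarith [Nat.cast_nonneg (α := ℝ) n]
  -- sum of measures of pieces at level n
  have hmsum : ∀ n, ∑ k ∈ Finset.range (K n), a (n, k) ≤ (m (U n)).toReal := by
    intro n
    have hdisj : (↑(Finset.range (K n)) : Set ℕ).PairwiseDisjoint (fun k => Q (n, k)) := by
      intro i _ j _ hij
      exact hQdisj (n, i) (n, j) (by simp [hij])
    have h1 : m (⋃ k ∈ Finset.range (K n), Q (n, k)) = ∑ k ∈ Finset.range (K n), m (Q (n, k)) :=
      measure_biUnion_finset hdisj (fun k _ => hQmeas (n, k))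
    have h2 : (⋃ k ∈ Finset.range (K n), Q (n, k)) ⊆ U n := by
      intro x hx
      simp only [Set.mem_iUnion] at hx
      obtain ⟨k, _, hk⟩ := hx
      exact hk.1
    have h3 : ∑ k ∈ Finset.range (K n), m (Q (n, k)) ≤ m (U n) := h1 ▸ measure_mono h2
    have h4 : (∑ k ∈ Finset.range (K n), m (Q (n, k))).toReal
        = ∑ k ∈ Finset.range (K n), a (n, k) :=
      ENNReal.toReal_sum (fun k _ => measure_ne_top m _)
    rw [← h4]
    exact ENNReal.toReal_mono (measure_ne_top m _) h3
  -- per-level entropy bound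
  have hlevel : ∀ n, ∑' k, F (n, k) ≤
      (m (U n)).toReal * c n + c n * Real.exp (-((n:ℝ)+2)) := by
    intro n
    rw [tsum_eq_sum (s := Finset.range (K n))
      (fun k hk => hFzero n k (le_of_not_gt (fun h => hk (Finset.mem_range.mpr h))))]
    calc ∑ k ∈ Finset.range (K n), F (n, k)
        ≤ ∑ k ∈ Finset.range (K n), (a (n, k) * c n + c n * Real.exp (-(c n))) := by
          apply Finset.sum_le_sum
          intro k _
          exact phi_le_aux (ha0 (n, k)) (hc1 n)
      _ = (∑ k ∈ Finset.range (K n), a (n, k)) * c n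
            + (K n : ℝ) * (c n * Real.exp (-(c n))) := by
          rw [Finset.sum_add_distrib, Finset.sum_mul, Finset.sum_const, Finset.card_range]
          ring
      _ ≤ (m (U n)).toReal * c n + c n * Real.exp (-((n:ℝ)+2)) := by
          have h1 := mul_le_mul_of_nonneg_right (hmsum n) (hc0 n)
          have h2 : (K n : ℝ) * (c n * Real.exp (-(c n)))
              = c n * ((K n : ℝ) * Real.exp (-(c n))) := by ring
          have h3 := mul_le_mul_of_nonneg_left (hKbound n) (hc0 n)
          linarith
  -- summability of the majorant
  have hgeo : Summable (fun n : ℕ => Real.exp (-((n:ℝ)+2))) := by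
    have h1 : ∀ n : ℕ, Real.exp (-((n:ℝ)+2)) = Real.exp (-2) * Real.exp (-1) ^ n := by
      intro n
      rw [← Real.exp_nat_mul, ← Real.exp_add]
      ring_nf
    exact Summable.congr ((summable_geometric_of_lt_one (Real.exp_pos _).le
      (Real.exp_lt_one_iff.2 (by norm_num))).mul_left (Real.exp (-2)))
      (fun n => (h1 n).symm)
  have hngeo : Summable (fun n : ℕ => (n:ℝ) * Real.exp (-((n:ℝ)+2))) := by
    have h1 : ∀ n : ℕ, (n:ℝ) * Real.exp (-((n:ℝ)+2))
        = Real.exp (-2) * ((n:ℝ)^1 * Real.exp (-1) ^ n) := by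
      intro n
      rw [← Real.exp_nat_mul, pow_one]
      have h2 : Real.exp (-(2:ℝ)) * Real.exp ((n:ℝ) * -1) = Real.exp (-((n:ℝ)+2)) := by
        rw [← Real.exp_add]; ring_nf
      rw [← h2]; ring
    have h2 : Summable (fun n : ℕ => (n:ℝ)^1 * Real.exp (-1) ^ n) :=
      summable_pow_mul_geometric_of_norm_lt_one 1
        (by rw [Real.norm_eq_abs, abs_of_pos (Real.exp_pos _)]
            exact Real.exp_lt_one_iff.2 (by norm_num))
    exact Summable.congr (h2.mul_left (Real.exp (-2))) (fun n => (h1 n).symm)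
  have hmU : Summable (fun n : ℕ => (m (U n)).toReal) := by
    apply summable_of_sum_range_le (fun n => ENNReal.toReal_nonneg) (c := 1)
    intro N
    have hdisj : (↑(Finset.range N) : Set ℕ).PairwiseDisjoint U :=
      fun i _ j _ hij => hUdisj i j hij
    have h1 : ∑ n ∈ Finset.range N, m (U n) = m (⋃ n ∈ Finset.range N, U n) :=
      (measure_biUnion_finset hdisj (fun n _ => hUmeas n)).symm
    have h2 : m (⋃ n ∈ Finset.range N, U n) ≤ 1 := prob_le_one
    have h3 : (∑ n ∈ Finset.range N, m (U n)).toReal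
        = ∑ n ∈ Finset.range N, (m (U n)).toReal :=
      ENNReal.toReal_sum (fun k _ => measure_ne_top m _)
    rw [← h3, h1]
    have := ENNReal.toReal_mono (by norm_num) h2
    simpa using this
  have hnmU : Summable (fun n : ℕ => (n:ℝ) * (m (U n)).toReal) := by
    apply summable_of_sum_range_le
      (fun n => mul_nonneg (Nat.cast_nonneg n) ENNReal.toReal_nonneg)
      (c := ∫ x, -Real.log (ρ x) ∂m)
    intro N
    have hstep : ∀ n : ℕ, (n:ℝ) * (m (U n)).toReal ≤ ∫ x in U n, -Real.log (ρ x) ∂m := by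
      intro n
      apply setIntegral_ge_of_const_le_real (hUmeas n) (measure_ne_top m _)
      · intro x hx
        have h2 : ρ x ≤ Real.exp (-(n:ℝ)) := ((hUmem n x).1 hx).2
        have h3 : Real.log (ρ x) ≤ -(n:ℝ) := by
          have := Real.log_le_log (hρ x).1 h2
          rwa [Real.log_exp] at this
        linarith
      · exact hLint.integrableOn
    have hsum : ∑ n ∈ Finset.range N, ∫ x in U n, -Real.log (ρ x) ∂m
        = ∫ x in ⋃ n ∈ Finset.range N, U n, -Real.log (ρ x) ∂m :=
      (integral_biUnion_finset (Finset.range N) (fun n _ => hUmeas n)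
        (fun i _ j _ hij => hUdisj i j hij) (fun n _ => hLint.integrableOn)).symm
    calc ∑ n ∈ Finset.range N, (n:ℝ) * (m (U n)).toReal
        ≤ ∑ n ∈ Finset.range N, ∫ x in U n, -Real.log (ρ x) ∂m :=
          Finset.sum_le_sum (fun n _ => hstep n)
      _ = ∫ x in ⋃ n ∈ Finset.range N, U n, -Real.log (ρ x) ∂m := hsum
      _ ≤ ∫ x, -Real.log (ρ x) ∂m :=
          setIntegral_le_integral hLint (Filter.Eventually.of_forall fun x => (hL0 x).le)
  have hmaj : Summable (fun n : ℕ =>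
      (m (U n)).toReal * c n + c n * Real.exp (-((n:ℝ)+2))) := by
    have e1 : Summable (fun n : ℕ => (m (U n)).toReal * c n) := by
      have : ∀ n : ℕ, (m (U n)).toReal * c n
          = (|Real.log C| + 2 * (d+2)) * (m (U n)).toReal
            + (d+2) * ((n:ℝ) * (m (U n)).toReal) := by
        intro n; simp only [hcdef]; ring
      exact Summable.congr (((hmU.mul_left _)).add (hnmU.mul_left _)) (fun n => (this n).symm)
    have e2 : Summable (fun n : ℕ => c n * Real.exp (-((n:ℝ)+2))) := by
      have : ∀ n : ℕ, c n * Real.exp (-((n:ℝ)+2))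
          = (|Real.log C| + 2 * (d+2)) * Real.exp (-((n:ℝ)+2))
            + (d+2) * ((n:ℝ) * Real.exp (-((n:ℝ)+2))) := by
        intro n; simp only [hcdef]; ring
      exact Summable.congr (((hgeo.mul_left _)).add (hngeo.mul_left _)) (fun n => (this n).symm)
    exact e1.add e2
  -- summability of F over pairs
  have hFsummable : Summable F := by
    rw [summable_prod_of_nonneg (fun p => hF0 p)]
    constructor
    · intro n
      exact summable_of_ne_finset_zero (s := Finset.range (K n))
        (fun k hk => hFzero n k (le_of_not_gt (fun h => hk (Finset.mem_range.mpr h))))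
    · apply Summable.of_nonneg_of_le (fun n => tsum_nonneg (fun k => hF0 (n, k)))
        (fun n => hlevel n) hmaj
  -- assemble
  refine ⟨fun n => Q (Nat.pairEquiv.symm n), fun n => hQmeas _, ?_, ?_, ?_, ?_⟩
  · intro i j hij
    exact hQdisj _ _ (fun h => hij (Nat.pairEquiv.symm.injective h))
  · ext x
    simp only [Set.mem_iUnion, Set.mem_univ, iff_true]
    have := hQunion
    rw [Set.eq_univ_iff_forall] at this
    obtain ⟨p, hp⟩ := Set.mem_iUnion.1 (this x)
    exact ⟨Nat.pairEquiv p, by rw [Equiv.symm_apply_apply]; exact hp⟩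
  · have : (fun n => -((m (Q (Nat.pairEquiv.symm n))).toReal
        * Real.log ((m (Q (Nat.pairEquiv.symm n))).toReal))) = F ∘ Nat.pairEquiv.symm := rfl
    rw [this]
    exact (Equiv.summable_iff Nat.pairEquiv.symm).2 hFsummable
  · exact Filter.Eventually.of_forall (fun x n hx => hQsmall _ x hx)
end
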